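/- Suppose y, Y : [0,T] → ℝⁿ and z, Z : [0,T] → ℝᵐ are differentiable with ẏ(t) = f(y(t), z(t)), g(y(t), z(t)) = 0 for all t, and φ^{(y)} : [0,T] → ℝⁿ, φ^{(z)} : [0,T] → ℝᵐ satisfy the adjoint DAE -φ̇^{(y)} = f̄_yᵀ φ^{(y)} + ḡ_yᵀ φ^{(z)} + ψ^y and 0 = f̄_zᵀ φ^{(y)} + ḡ_zᵀ φ^{(z)} + ψ^z on [0,T), where f̄_y, f̄_z, ḡ_y, ḡ_z are the averaged Jacobians along the segment between (y(t),z(t)) and (Y(t),Z(t)). Then with e^{(y)} = y - Y and e^{(z)} = z - Z, ∫₀ᵀ (e^{(y)}, ψ^y) dt + ∫₀ᵀ (e^{(z)}, ψ^z) dt = (φ^{(y)}(0), e^{(y)}(0)) - (φ^{(y)}(T), e^{(y)}(T)) + ∫₀ᵀ (φ^{(y)}, f(Y,Z) - Ẏ) dt + ∫₀ᵀ (φ^{(z)}, g(Y,Z)) dt. -/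

import Mathlib

open Matrix MeasureTheory

/-- The averaged Jacobian matrix `∫₀¹ DF(s) (c s) ds`. -/
noncomputable def avgJac {p q : ℕ} (F : ℝ → (Fin p → ℝ) → (Fin q → ℝ))
    (c : ℝ → Fin p → ℝ) : Matrix (Fin q) (Fin p) ℝ :=
  LinearMap.toMatrix'
    ((∫ s in (0:ℝ)..1, fderiv ℝ (F s) (c s)).toLinearMap)

lemma avgJac_mulVec {p q : ℕ} (F : ℝ → (Fin p → ℝ) → (Fin q → ℝ)) (c : ℝ → Fin p → ℝ)
    (v : Fin p → ℝ) :
    avgJac F c *ᵥ v = (∫ s in (0:ℝ)..1, fderiv ℝ (F s) (c s)) v := by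
  rw [avgJac, ← Matrix.toLin'_apply, Matrix.toLin'_toMatrix']
  rfl

lemma Continuous.dotProd {k : ℕ} {u v : ℝ → Fin k → ℝ} (hu : Continuous u) (hv : Continuous v) :
    Continuous fun t => u t ⬝ᵥ v t := by
  simp only [dotProduct]
  exact continuous_finset_sum _ fun i _ =>
    ((continuous_apply i).comp hu).mul ((continuous_apply i).comp hv)

lemma HasDerivAt.dotProd {k : ℕ} {u v : ℝ → Fin k → ℝ} {u' v' : Fin k → ℝ} {t : ℝ}
    (hu : HasDerivAt u u' t) (hv : HasDerivAt v v' t) :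
    HasDerivAt (fun t => u t ⬝ᵥ v t) (u' ⬝ᵥ v t + u t ⬝ᵥ v') t := by
  simp only [dotProduct]
  rw [← Finset.sum_add_distrib]
  exact HasDerivAt.fun_sum fun i _ => (hasDerivAt_pi.mp hu i).mul (hasDerivAt_pi.mp hv i)

lemma transDot {p q : ℕ} (M : Matrix (Fin p) (Fin q) ℝ) (u : Fin p → ℝ) (v : Fin q → ℝ) :
    (Mᵀ *ᵥ u) ⬝ᵥ v = u ⬝ᵥ (M *ᵥ v) := by
  rw [Matrix.mulVec_transpose, Matrix.dotProduct_mulVec]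

lemma avgJac_segment {p r q : ℕ} (f : (Fin p → ℝ) × (Fin r → ℝ) → (Fin q → ℝ))
    (hf : ContDiff ℝ 1 f) (a A : Fin p → ℝ) (b B : Fin r → ℝ) :
    avgJac (fun s y' => f (y', s • b + (1 - s) • B)) (fun s => s • a + (1 - s) • A) *ᵥ (a - A)
      + avgJac (fun s z' => f (s • a + (1 - s) • A, z')) (fun s => s • b + (1 - s) • B) *ᵥ (b - B)
    = f (a, b) - f (A, B) := by
  set γ : ℝ → (Fin p → ℝ) × (Fin r → ℝ) := fun s => s • (a, b) + (1 - s) • (A, B) with hγ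
  have hdf : Differentiable ℝ f := hf.differentiable one_ne_zero
  have hDfc : Continuous fun x => fderiv ℝ f x := hf.continuous_fderiv one_ne_zero
  have hγc : Continuous γ := by
    exact (continuous_id.smul continuous_const).add
      ((continuous_const.sub continuous_id).smul continuous_const)
  have h1 : ∀ s : ℝ, fderiv ℝ (fun y' => f (y', s • b + (1 - s) • B)) (s • a + (1 - s) • A)
      = (fderiv ℝ f (γ s)).comp (ContinuousLinearMap.inl ℝ _ _) :=
    fun s => ((hdf _).hasFDerivAt.comp (s • a + (1 - s) • A)
      (hasFDerivAt_prodMk_left (s • a + (1 - s) • A) (s • b + (1 - s) • B))).fderiv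
  have h2 : ∀ s : ℝ, fderiv ℝ (fun z' => f (s • a + (1 - s) • A, z')) (s • b + (1 - s) • B)
      = (fderiv ℝ f (γ s)).comp (ContinuousLinearMap.inr ℝ _ _) :=
    fun s => ((hdf _).hasFDerivAt.comp (s • b + (1 - s) • B)
      (hasFDerivAt_prodMk_right (s • a + (1 - s) • A) (s • b + (1 - s) • B))).fderiv
  have hc1 : Continuous fun s : ℝ =>
      fderiv ℝ (fun y' => f (y', s • b + (1 - s) • B)) (s • a + (1 - s) • A) := by
    simp only [h1]; exact (hDfc.comp hγc).clm_comp continuous_const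
  have hc2 : Continuous fun s : ℝ =>
      fderiv ℝ (fun z' => f (s • a + (1 - s) • A, z')) (s • b + (1 - s) • B) := by
    simp only [h2]; exact (hDfc.comp hγc).clm_comp continuous_const
  rw [avgJac_mulVec, avgJac_mulVec,
    ContinuousLinearMap.intervalIntegral_apply (hc1.intervalIntegrable 0 1) (a - A),
    ContinuousLinearMap.intervalIntegral_apply (hc2.intervalIntegrable 0 1) (b - B),
    ← intervalIntegral.integral_add
      ((hc1.clm_apply continuous_const).intervalIntegrable 0 1)
      ((hc2.clm_apply continuous_const).intervalIntegrable 0 1)]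
  have hγd : ∀ s : ℝ, HasDerivAt γ ((a, b) - (A, B)) s := by
    intro s
    have j1 : HasDerivAt (fun s : ℝ => s • (a, b)) ((1:ℝ) • (a, b)) s :=
      (hasDerivAt_id s).smul_const _
    have j2 : HasDerivAt (fun s : ℝ => (1 - s) • (A, B)) (((0:ℝ) - 1) • (A, B)) s :=
      ((hasDerivAt_const s (1:ℝ)).sub (hasDerivAt_id s)).smul_const _
    simpa [sub_eq_add_neg, hγ] using j1.fun_add j2
  have hcomp : ∀ s ∈ Set.uIcc (0:ℝ) 1,
      HasDerivAt (fun s => f (γ s)) (fderiv ℝ f (γ s) ((a, b) - (A, B))) s :=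
    fun s _ => ((hdf (γ s)).hasFDerivAt.comp_hasDerivAt s (hγd s))
  have hik : IntervalIntegrable (fun s => fderiv ℝ f (γ s) ((a, b) - (A, B))) volume 0 1 :=
    (((hDfc.comp hγc)).clm_apply continuous_const).intervalIntegrable 0 1
  have ftc := intervalIntegral.integral_eq_sub_of_hasDerivAt hcomp hik
  have hpt : ∀ s : ℝ,
      fderiv ℝ (fun y' => f (y', s • b + (1 - s) • B)) (s • a + (1 - s) • A) (a - A)
        + fderiv ℝ (fun z' => f (s • a + (1 - s) • A, z')) (s • b + (1 - s) • B) (b - B)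
      = fderiv ℝ f (γ s) ((a, b) - (A, B)) := by
    intro s
    rw [h1 s, h2 s]
    simp only [ContinuousLinearMap.comp_apply, ContinuousLinearMap.inl_apply,
      ContinuousLinearMap.inr_apply]
    rw [← ContinuousLinearMap.map_add]
    congr 1
    simp [Prod.ext_iff]
  rw [intervalIntegral.integral_congr (g := fun s => fderiv ℝ f (γ s) ((a, b) - (A, B)))
    (fun s _ => hpt s), ftc]
  simp [hγ]

/-- Adjoint error identity (Lemma `adj_error`) for a semi-explicit DAE. -/
theorem adjoint_dae_error_identity {n m : ℕ} (T : ℝ) (hT : 0 < T)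
    (f : (Fin n → ℝ) × (Fin m → ℝ) → (Fin n → ℝ))
    (g : (Fin n → ℝ) × (Fin m → ℝ) → (Fin m → ℝ))
    (hf : ContDiff ℝ 1 f) (hg : ContDiff ℝ 1 g)
    (y Y Y' ψy φy : ℝ → Fin n → ℝ) (z Z ψz φz : ℝ → Fin m → ℝ)
    (fby : ℝ → Matrix (Fin n) (Fin n) ℝ) (fbz : ℝ → Matrix (Fin n) (Fin m) ℝ)
    (gby : ℝ → Matrix (Fin m) (Fin n) ℝ) (gbz : ℝ → Matrix (Fin m) (Fin m) ℝ)
    -- the averaged Jacobians along the segment between (y,z) and (Y,Z)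
    (hfby : ∀ t, fby t = avgJac (fun s y' => f (y', s • z t + (1 - s) • Z t))
      (fun s => s • y t + (1 - s) • Y t))
    (hfbz : ∀ t, fbz t = avgJac (fun s z' => f (s • y t + (1 - s) • Y t, z'))
      (fun s => s • z t + (1 - s) • Z t))
    (hgby : ∀ t, gby t = avgJac (fun s y' => g (y', s • z t + (1 - s) • Z t))
      (fun s => s • y t + (1 - s) • Y t))
    (hgbz : ∀ t, gbz t = avgJac (fun s z' => g (s • y t + (1 - s) • Y t, z'))
      (fun s => s • z t + (1 - s) • Z t))
    -- the true solution of the DAE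
    (hy : ∀ t ∈ Set.Icc (0:ℝ) T, HasDerivAt y (f (y t, z t)) t)
    (hcon : ∀ t ∈ Set.Icc (0:ℝ) T, g (y t, z t) = 0)
    -- the approximate solution and its derivative
    (hY : ∀ t ∈ Set.Icc (0:ℝ) T, HasDerivAt Y (Y' t) t)
    -- the adjoint DAE
    (hadj1 : ∀ t ∈ Set.Ico (0:ℝ) T,
      HasDerivAt φy (-((fby t)ᵀ *ᵥ φy t + (gby t)ᵀ *ᵥ φz t + ψy t)) t)
    (hadj2 : ∀ t ∈ Set.Ico (0:ℝ) T,
      (fbz t)ᵀ *ᵥ φy t + (gbz t)ᵀ *ᵥ φz t + ψz t = 0)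
    -- sufficient smoothness for the integrals and integration by parts
    (hyc : Continuous y) (hYc : Continuous Y) (hY'c : Continuous Y')
    (hzc : Continuous z) (hZc : Continuous Z)
    (hψyc : Continuous ψy) (hψzc : Continuous ψz)
    (hφyc : Continuous φy) (hφzc : Continuous φz) :
    (∫ t in (0:ℝ)..T, (y t - Y t) ⬝ᵥ ψy t)
      + (∫ t in (0:ℝ)..T, (z t - Z t) ⬝ᵥ ψz t)
    = φy 0 ⬝ᵥ (y 0 - Y 0) - φy T ⬝ᵥ (y T - Y T)
      + (∫ t in (0:ℝ)..T, φy t ⬝ᵥ (f (Y t, Z t) - Y' t))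
      + (∫ t in (0:ℝ)..T, φz t ⬝ᵥ g (Y t, Z t)) := by

  -- pointwise derivative identity for h(t) = φy t ⬝ᵥ (y t - Y t)
  have hderiv : ∀ t ∈ Set.Ioo (0:ℝ) T,
      HasDerivAt (fun t => φy t ⬝ᵥ (y t - Y t))
        (-((y t - Y t) ⬝ᵥ ψy t) - ((z t - Z t) ⬝ᵥ ψz t)
          + φy t ⬝ᵥ (f (Y t, Z t) - Y' t) + φz t ⬝ᵥ g (Y t, Z t)) t := by
    intro t ht
    have ht' : t ∈ Set.Icc (0:ℝ) T := Set.Ioo_subset_Icc_self ht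
    have ht'' : t ∈ Set.Ico (0:ℝ) T := ⟨ht.1.le, ht.2⟩
    have He : HasDerivAt (fun t => y t - Y t) (f (y t, z t) - Y' t) t := (hy t ht').sub (hY t ht')
    have Hd := (hadj1 t ht'').dotProd He
    convert Hd using 1
    have Emvtf : fby t *ᵥ (y t - Y t) + fbz t *ᵥ (z t - Z t) = f (y t, z t) - f (Y t, Z t) := by
      rw [hfby, hfbz]; exact avgJac_segment f hf (y t) (Y t) (z t) (Z t)
    have Emvtg : gby t *ᵥ (y t - Y t) + gbz t *ᵥ (z t - Z t) = g (y t, z t) - g (Y t, Z t) := by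
      rw [hgby, hgbz]; exact avgJac_segment g hg (y t) (Y t) (z t) (Z t)
    have E2 : φy t ⬝ᵥ (fby t *ᵥ (y t - Y t)) + φy t ⬝ᵥ (fbz t *ᵥ (z t - Z t))
        = φy t ⬝ᵥ f (y t, z t) - φy t ⬝ᵥ f (Y t, Z t) := by
      rw [← dotProduct_add, Emvtf, dotProduct_sub]
    have E3 : φz t ⬝ᵥ (gby t *ᵥ (y t - Y t)) + φz t ⬝ᵥ (gbz t *ᵥ (z t - Z t))
        = - (φz t ⬝ᵥ g (Y t, Z t)) := by
      rw [← dotProduct_add, Emvtg, hcon t ht', dotProduct_sub]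
      simp
    have E1 : φy t ⬝ᵥ (fbz t *ᵥ (z t - Z t)) + φz t ⬝ᵥ (gbz t *ᵥ (z t - Z t))
        + ψz t ⬝ᵥ (z t - Z t) = 0 := by
      have := congrArg (fun w => w ⬝ᵥ (z t - Z t)) (hadj2 t ht'')
      simpa only [add_dotProduct, zero_dotProduct, transDot] using this
    have c1 : (y t - Y t) ⬝ᵥ ψy t = ψy t ⬝ᵥ (y t - Y t) := dotProduct_comm _ _
    have c2 : (z t - Z t) ⬝ᵥ ψz t = ψz t ⬝ᵥ (z t - Z t) := dotProduct_comm _ _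
    simp only [neg_dotProduct, add_dotProduct, dotProduct_sub,
      Matrix.mulVec_sub, transDot] at E1 E2 E3 c1 c2 ⊢
    linarith
  -- integrate
  have hjc : Continuous fun t => f (Y t, Z t) := hf.continuous.comp (hYc.prodMk hZc)
  have hkc : Continuous fun t => g (Y t, Z t) := hg.continuous.comp (hYc.prodMk hZc)
  have i1 : IntervalIntegrable (fun t => (y t - Y t) ⬝ᵥ ψy t) volume 0 T :=
    ((hyc.sub hYc).dotProd hψyc).intervalIntegrable 0 T
  have i2 : IntervalIntegrable (fun t => (z t - Z t) ⬝ᵥ ψz t) volume 0 T :=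
    ((hzc.sub hZc).dotProd hψzc).intervalIntegrable 0 T
  have i3 : IntervalIntegrable (fun t => φy t ⬝ᵥ (f (Y t, Z t) - Y' t)) volume 0 T :=
    (hφyc.dotProd (hjc.sub hY'c)).intervalIntegrable 0 T
  have i4 : IntervalIntegrable (fun t => φz t ⬝ᵥ g (Y t, Z t)) volume 0 T :=
    (hφzc.dotProd hkc).intervalIntegrable 0 T
  have d1 : Continuous fun t => -((y t - Y t) ⬝ᵥ ψy t) - (z t - Z t) ⬝ᵥ ψz t :=
    ((hyc.sub hYc).dotProd hψyc).neg.sub ((hzc.sub hZc).dotProd hψzc)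
  have d2 : Continuous fun t => -((y t - Y t) ⬝ᵥ ψy t) - (z t - Z t) ⬝ᵥ ψz t
      + φy t ⬝ᵥ (f (Y t, Z t) - Y' t) :=
    d1.add (hφyc.dotProd (hjc.sub hY'c))
  have key : (∫ t in (0:ℝ)..T, (-((y t - Y t) ⬝ᵥ ψy t) - ((z t - Z t) ⬝ᵥ ψz t)
        + φy t ⬝ᵥ (f (Y t, Z t) - Y' t) + φz t ⬝ᵥ g (Y t, Z t)))
      = φy T ⬝ᵥ (y T - Y T) - φy 0 ⬝ᵥ (y 0 - Y 0) :=
    intervalIntegral.integral_eq_sub_of_hasDeriv_right_of_le hT.le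
      (hφyc.dotProd (hyc.sub hYc)).continuousOn
      (fun t ht => (hderiv t ht).hasDerivWithinAt)
      ((d2.add (hφzc.dotProd hkc)).intervalIntegrable 0 T)
  rw [intervalIntegral.integral_add (d2.intervalIntegrable 0 T) i4,
    intervalIntegral.integral_add (d1.intervalIntegrable 0 T) i3,
    intervalIntegral.integral_sub (show IntervalIntegrable (fun t => -((y t - Y t) ⬝ᵥ ψy t)) volume 0 T from i1.neg) i2,
    intervalIntegral.integral_neg] at key
  linarith
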